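/- Let Γ be a signed graph of order m+1 and let v be a vertex of Γ with positive degree d_v⁺ = 0 (no positive edge is incident to v). Let Γ' = Γ − v be the signed graph of order m obtained by deleting v together with its incident edges. If (α_1, α_2, …, α_{m+1}) and (β_1, β_2, …, β_m) are the ordered net-Laplacian spectra of Γ and Γ' respectively, then α_p ≤ β_p ≤ α_{p+1} + 1 for every p = 1, 2, …, m. -/

import Mathlib

open Polynomial

/-- A signed adjacency matrix: symmetric, zero diagonal, entries in {-1,0,1}. -/
def IsSignedAdj {n : ℕ} (A : Matrix (Fin n) (Fin n) ℝ) : Prop :=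
  A.IsSymm ∧ (∀ i, A i i = 0) ∧ ∀ i j, A i j = -1 ∨ A i j = 0 ∨ A i j = 1

/-- Degree of vertex `i`: number of neighbours. -/
noncomputable def deg {n : ℕ} (A : Matrix (Fin n) (Fin n) ℝ) (i : Fin n) : ℕ :=
  {j | A i j ≠ 0}.ncard

/-- Negative degree of vertex `i`. -/
noncomputable def negDeg {n : ℕ} (A : Matrix (Fin n) (Fin n) ℝ) (i : Fin n) : ℕ :=
  {j | A i j = -1}.ncard

/-- Positive degree of vertex `i`. -/
noncomputable def posDeg {n : ℕ} (A : Matrix (Fin n) (Fin n) ℝ) (i : Fin n) : ℕ :=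
  {j | A i j = 1}.ncard

/-- Laplacian matrix `L = D - A`. -/
noncomputable def lap {n : ℕ} (A : Matrix (Fin n) (Fin n) ℝ) : Matrix (Fin n) (Fin n) ℝ :=
  Matrix.diagonal (fun i => (deg A i : ℝ)) - A

/-- Net-Laplacian matrix `N = D± - A`, where `D±` is the diagonal of signed degrees. -/
noncomputable def netLap {n : ℕ} (A : Matrix (Fin n) (Fin n) ℝ) : Matrix (Fin n) (Fin n) ℝ :=
  Matrix.diagonal (fun i => ∑ j, A i j) - A

/-- Normalized net-Laplacian `D^{-1/2} N D^{-1/2}`. -/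
noncomputable def normNetLap {n : ℕ} (A : Matrix (Fin n) (Fin n) ℝ) :
    Matrix (Fin n) (Fin n) ℝ :=
  Matrix.diagonal (fun i => (Real.sqrt (deg A i))⁻¹) * netLap A *
    Matrix.diagonal (fun i => (Real.sqrt (deg A i))⁻¹)

/-- `μ` is the ordered (non-decreasing) spectrum of `M` : it is monotone and lists the
eigenvalues of `M` with multiplicity, i.e. the characteristic polynomial splits as
`∏ (X - μ i)`. -/
def IsOrderedSpectrum {n : ℕ} (M : Matrix (Fin n) (Fin n) ℝ) (μ : Fin n → ℝ) : Prop :=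
  Monotone μ ∧ M.charpoly = ∏ i, (X - C (μ i))

/-- Deleting the edge `uv`: set the `(u,v)` and `(v,u)` entries to `0`. -/
def deleteEdge {n : ℕ} (A : Matrix (Fin n) (Fin n) ℝ) (u v : Fin n) :
    Matrix (Fin n) (Fin n) ℝ :=
  Matrix.of fun i j => if (i = u ∧ j = v) ∨ (i = v ∧ j = u) then 0 else A i j

/-- Deleting the vertex `v`: principal submatrix omitting row/column `v`. -/
def deleteVertex {n : ℕ} (A : Matrix (Fin (n+1)) (Fin (n+1)) ℝ) (v : Fin (n+1)) :
    Matrix (Fin n) (Fin n) ℝ :=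
  A.submatrix v.succAbove v.succAbove

section Aux

open Matrix Finset Module


lemma charpoly_conj {n : ℕ} (P Q D : Matrix (Fin n) (Fin n) ℝ) (h1 : P * Q = 1) :
    (P * D * Q).charpoly = D.charpoly := by
  have h2 : Q * P = 1 := mul_eq_one_comm.mp h1
  have hPQ : (P.map C) * (Q.map C) = 1 := by
    rw [← Matrix.map_mul, h1]; simp [Matrix.map_one]
  have hQP : (Q.map C) * (P.map C) = 1 := by
    rw [← Matrix.map_mul, h2]; simp [Matrix.map_one]
  have key : charmatrix (P * D * Q) = P.map C * charmatrix D * Q.map C := by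
    rw [charmatrix, charmatrix, Matrix.mul_sub, Matrix.sub_mul]
    congr 1
    · rw [mul_assoc, ((Matrix.scalar_commute X (Commute.all X) (Q.map C)).eq), ← mul_assoc, hPQ,
        one_mul]
    · rw [RingHom.mapMatrix_apply, RingHom.mapMatrix_apply, ← Matrix.map_mul, ← Matrix.map_mul]
  unfold Matrix.charpoly
  rw [key, det_mul, det_mul, mul_comm, ← mul_assoc, ← det_mul, hQP, det_one, one_mul]

lemma charpoly_diagonal {n : ℕ} (d : Fin n → ℝ) :
    (diagonal d).charpoly = ∏ i, (X - C (d i)) := by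
  rw [Matrix.charpoly_of_upperTriangular _ (Matrix.blockTriangular_diagonal d)]
  simp

lemma charpoly_eq_prod_eigenvalues {n : ℕ} {M : Matrix (Fin n) (Fin n) ℝ}
    (hM : M.IsHermitian) : M.charpoly = ∏ i, (X - C (hM.eigenvalues i)) := by
  conv_lhs => rw [hM.spectral_theorem]
  rw [Unitary.conjStarAlgAut_apply, charpoly_conj _ _ _ (Matrix.mem_unitaryGroup_iff.mp hM.eigenvectorUnitary.2),
    charpoly_diagonal]
  simp [RCLike.ofReal_real_eq_id]

lemma prod_X_sub_C_eq {n : ℕ} (f : Fin n → ℝ) :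
    ∏ i, (X - C (f i)) = (Multiset.map (fun a => X - C a) (Multiset.map f Finset.univ.val)).prod := by
  rw [Multiset.map_map]; rfl

lemma monotone_eq_of_prod_eq {n : ℕ} {f g : Fin n → ℝ} (hf : Monotone f) (hg : Monotone g)
    (h : ∏ i, (X - C (f i)) = ∏ i, (X - C (g i))) : f = g := by
  have hroots : Multiset.map f Finset.univ.val = Multiset.map g Finset.univ.val := by
    have h2 := congrArg Polynomial.roots h
    rwa [prod_X_sub_C_eq, prod_X_sub_C_eq,
      Polynomial.roots_multiset_prod_X_sub_C, Polynomial.roots_multiset_prod_X_sub_C] at h2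
  rw [Fin.univ_val_map, Fin.univ_val_map, Multiset.coe_eq_coe] at hroots
  exact List.ofFn_injective (List.Perm.eq_of_sortedLE
    (List.sortedLE_ofFn_iff.mpr hf) (List.sortedLE_ofFn_iff.mpr hg) hroots)


variable {n r s : ℕ}

/-- From a symmetric real matrix, an orthonormal eigenbasis with monotone eigenvalues,
matching any prescribed monotone tuple whose product of linear factors is the charpoly. -/
lemma exists_eigenbasis {n : ℕ} {M : Matrix (Fin n) (Fin n) ℝ} (hM : M.IsSymm)
    {μ : Fin n → ℝ} (hmono : Monotone μ) (hchar : M.charpoly = ∏ i, (X - C (μ i))) :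
    ∃ u : Fin n → (Fin n → ℝ), (∀ i j, u i ⬝ᵥ u j = if i = j then 1 else 0) ∧
      ∀ i, M *ᵥ u i = μ i • u i := by
  have hH : M.IsHermitian := by
    rw [Matrix.IsHermitian]; ext i j; simp [Matrix.conjTranspose_apply, hM.apply]
  set σ := Tuple.sort hH.eigenvalues with hσ
  have hμ : μ = hH.eigenvalues ∘ σ := by
    apply monotone_eq_of_prod_eq hmono (Tuple.monotone_sort _)
    rw [← hchar, charpoly_eq_prod_eigenvalues hH]
    exact (Equiv.prod_comp σ (fun i => X - C (hH.eigenvalues i))).symm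
  refine ⟨fun i => (WithLp.equiv 2 (Fin n → ℝ)) (hH.eigenvectorBasis (σ i)), ?_, ?_⟩
  · intro i j
    have horth := orthonormal_iff_ite.mp hH.eigenvectorBasis.orthonormal (σ i) (σ j)
    rw [PiLp.inner_apply] at horth
    simpa [dotProduct, RCLike.inner_apply, EmbeddingLike.apply_eq_iff_eq, mul_comm] using horth
  · intro i
    rw [hμ]
    exact hH.mulVec_eigenvectorBasis (σ i)

variable {n r s : ℕ}

lemma dot_sum_right (v : Fin n → ℝ) {ι : Type*} (t : Finset ι) (f : ι → Fin n → ℝ) :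
    v ⬝ᵥ (∑ j ∈ t, f j) = ∑ j ∈ t, v ⬝ᵥ f j := by
  simp only [dotProduct, Finset.sum_apply, Finset.mul_sum]
  exact Finset.sum_comm

lemma sum_dot_left (v : Fin n → ℝ) {ι : Type*} (t : Finset ι) (f : ι → Fin n → ℝ) :
    (∑ j ∈ t, f j) ⬝ᵥ v = ∑ j ∈ t, f j ⬝ᵥ v := by
  simp only [dotProduct, Finset.sum_apply, Finset.sum_mul]
  exact Finset.sum_comm

/-- Orthonormal families: dot of linear combinations. -/
lemma dot_sum_sum (a : Fin r → (Fin n → ℝ))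
    (ha : ∀ i j, a i ⬝ᵥ a j = if i = j then 1 else 0) (c e : Fin r → ℝ) :
    (∑ i, c i • a i) ⬝ᵥ (∑ j, e j • a j) = ∑ i, c i * e i := by
  rw [sum_dot_left]
  refine Finset.sum_congr rfl fun i _ => ?_
  rw [smul_dotProduct, dot_sum_right]
  simp [dotProduct_smul, ha, Finset.sum_ite_eq, mul_comm]

lemma orthonormal_li (a : Fin r → (Fin n → ℝ))
    (ha : ∀ i j, a i ⬝ᵥ a j = if i = j then 1 else 0) :
    LinearIndependent ℝ a := by
  rw [linearIndependent_iff']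
  intro t g hsum i hi
  have h2 := congrArg (fun x => a i ⬝ᵥ x) hsum
  simp only [dotProduct_zero] at h2
  rw [dot_sum_right] at h2
  simp only [dotProduct_smul, ha, smul_eq_mul, mul_ite, mul_one, mul_zero] at h2
  rwa [Finset.sum_ite_eq t i (fun j => g j), if_pos hi] at h2

/-- Dimension counting: two orthonormal families with supports whose cards exceed n
admit a common nonzero linear combination. -/
lemma exists_common_vector (a : Fin r → (Fin n → ℝ)) (b : Fin s → (Fin n → ℝ))
    (ha : ∀ i j, a i ⬝ᵥ a j = if i = j then 1 else 0)
    (hb : ∀ i j, b i ⬝ᵥ b j = if i = j then 1 else 0)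
    (S : Finset (Fin r)) (T : Finset (Fin s)) (hcard : n < S.card + T.card) :
    ∃ (c : Fin r → ℝ) (d : Fin s → ℝ), (∀ i ∉ S, c i = 0) ∧ (∀ j ∉ T, d j = 0) ∧
      (∑ i, c i • a i) = (∑ j, d j • b j) ∧ (∑ i, c i • a i) ≠ 0 := by
  classical
  set V : Submodule ℝ (Fin n → ℝ) := Submodule.span ℝ (Set.range (fun i : S => a i)) with hV
  set W : Submodule ℝ (Fin n → ℝ) := Submodule.span ℝ (Set.range (fun j : T => b j)) with hW
  have liA : LinearIndependent ℝ (fun i : S => a i) :=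
    (orthonormal_li a ha).comp _ Subtype.val_injective
  have liB : LinearIndependent ℝ (fun j : T => b j) :=
    (orthonormal_li b hb).comp _ Subtype.val_injective
  have hdV : finrank ℝ V = S.card := by rw [hV, finrank_span_eq_card liA, Fintype.card_coe]
  have hdW : finrank ℝ W = T.card := by rw [hW, finrank_span_eq_card liB, Fintype.card_coe]
  have hsup : finrank ℝ (V ⊔ W : Submodule ℝ (Fin n → ℝ)) ≤ n := by
    refine le_trans (Submodule.finrank_le _) ?_
    rw [Module.finrank_pi]; simp
  have hinf : 0 < finrank ℝ (V ⊓ W : Submodule ℝ (Fin n → ℝ)) := by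
    have := Submodule.finrank_sup_add_finrank_inf_eq V W
    omega
  have hne : (V ⊓ W : Submodule ℝ (Fin n → ℝ)) ≠ ⊥ := by
    intro hbot
    rw [hbot, finrank_bot] at hinf
    exact lt_irrefl 0 hinf
  obtain ⟨x, hxVW, hx0⟩ := (Submodule.ne_bot_iff _).mp hne
  obtain ⟨cS, hcS⟩ := (Submodule.mem_span_range_iff_exists_fun ℝ).mp hxVW.1
  obtain ⟨dT, hdT⟩ := (Submodule.mem_span_range_iff_exists_fun ℝ).mp hxVW.2
  refine ⟨fun i => if h : i ∈ S then cS ⟨i, h⟩ else 0,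
    fun j => if h : j ∈ T then dT ⟨j, h⟩ else 0, fun i hi => dif_neg hi, fun j hj => dif_neg hj,
    ?_, ?_⟩
  · have e1 : ∀ (k : ℕ) (w : Fin k → Fin n → ℝ) (U : Finset (Fin k)) (cU : U → ℝ),
        (∑ i, (if h : i ∈ U then cU ⟨i, h⟩ else 0) • w i) = ∑ i : U, cU i • w i := by
      intro k w U cU
      rw [← Finset.sum_subset (Finset.subset_univ U)
        (fun i _ hi => by rw [dif_neg hi, zero_smul])]
      rw [← Finset.sum_attach U (fun i => (if h : i ∈ U then cU ⟨i, h⟩ else 0) • w i),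
        Finset.univ_eq_attach]
      refine Finset.sum_congr rfl fun i _ => ?_
      rw [dif_pos i.2]
    rw [e1, e1, hcS, hdT]
  · intro hzero
    rw [show (∑ i, (if h : i ∈ S then cS ⟨i, h⟩ else 0) • a i) = x by
      rw [← hcS, ← Finset.sum_subset (Finset.subset_univ S)
        (fun i _ hi => by rw [dif_neg hi, zero_smul]),
        ← Finset.sum_attach S (fun i => (if h : i ∈ S then cS ⟨i, h⟩ else 0) • a i),
        Finset.univ_eq_attach]
      exact Finset.sum_congr rfl fun i _ => by rw [dif_pos i.2]] at hzero
    exact hx0 hzero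

variable {n r s : ℕ}


lemma mulVec_sum_eigen {M : Matrix (Fin n) (Fin n) ℝ} {a : Fin r → Fin n → ℝ}
    {μ : Fin r → ℝ} (heig : ∀ i, M *ᵥ a i = μ i • a i) (c : Fin r → ℝ) :
    M *ᵥ (∑ i, c i • a i) = ∑ i, (c i * μ i) • a i := by
  have h := map_sum (Matrix.mulVecLin M) (fun i => c i • a i) Finset.univ
  simp only [Matrix.mulVecLin_apply] at h
  rw [h]
  refine Finset.sum_congr rfl fun i _ => ?_
  rw [Matrix.mulVec_smul, heig i, smul_smul]

lemma qform_val {M : Matrix (Fin n) (Fin n) ℝ} {a : Fin r → Fin n → ℝ}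
    (ha : ∀ i j, a i ⬝ᵥ a j = if i = j then 1 else 0)
    {μ : Fin r → ℝ} (heig : ∀ i, M *ᵥ a i = μ i • a i) (c : Fin r → ℝ) :
    (∑ i, c i • a i) ⬝ᵥ (M *ᵥ (∑ i, c i • a i)) = ∑ i, μ i * (c i * c i) := by
  rw [mulVec_sum_eigen heig, dot_sum_sum a ha]
  exact Finset.sum_congr rfl fun i _ => by ring

lemma qform_le {M : Matrix (Fin n) (Fin n) ℝ} {a : Fin r → Fin n → ℝ}
    (ha : ∀ i j, a i ⬝ᵥ a j = if i = j then 1 else 0)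
    {μ : Fin r → ℝ} (heig : ∀ i, M *ᵥ a i = μ i • a i) (c : Fin r → ℝ) {t : ℝ}
    (h : ∀ i, c i ≠ 0 → μ i ≤ t) :
    (∑ i, c i • a i) ⬝ᵥ (M *ᵥ (∑ i, c i • a i)) ≤
      t * ((∑ i, c i • a i) ⬝ᵥ (∑ i, c i • a i)) := by
  rw [qform_val ha heig, dot_sum_sum a ha, Finset.mul_sum]
  refine Finset.sum_le_sum fun i _ => ?_
  rcases eq_or_ne (c i) 0 with h0 | h0
  · simp [h0]
  · exact mul_le_mul_of_nonneg_right (h i h0) (mul_self_nonneg _)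

lemma qform_ge {M : Matrix (Fin n) (Fin n) ℝ} {a : Fin r → Fin n → ℝ}
    (ha : ∀ i j, a i ⬝ᵥ a j = if i = j then 1 else 0)
    {μ : Fin r → ℝ} (heig : ∀ i, M *ᵥ a i = μ i • a i) (c : Fin r → ℝ) {t : ℝ}
    (h : ∀ i, c i ≠ 0 → t ≤ μ i) :
    t * ((∑ i, c i • a i) ⬝ᵥ (∑ i, c i • a i)) ≤
      (∑ i, c i • a i) ⬝ᵥ (M *ᵥ (∑ i, c i • a i)) := by
  rw [qform_val ha heig, dot_sum_sum a ha, Finset.mul_sum]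
  refine Finset.sum_le_sum fun i _ => ?_
  rcases eq_or_ne (c i) 0 with h0 | h0
  · simp [h0]
  · exact mul_le_mul_of_nonneg_right (h i h0) (mul_self_nonneg _)

/-- The core comparison lemma. -/
lemma core_compare (a : Fin r → (Fin n → ℝ)) (b : Fin s → (Fin n → ℝ))
    (ha : ∀ i j, a i ⬝ᵥ a j = if i = j then 1 else 0)
    (hb : ∀ i j, b i ⬝ᵥ b j = if i = j then 1 else 0)
    (S : Finset (Fin r)) (T : Finset (Fin s)) (hcard : n < S.card + T.card)
    (Q : (Fin n → ℝ) → ℝ) {t t' : ℝ}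
    (hlow : ∀ c : Fin r → ℝ, (∀ i ∉ S, c i = 0) →
      t * ((∑ i, c i • a i) ⬝ᵥ (∑ i, c i • a i)) ≤ Q (∑ i, c i • a i))
    (hhigh : ∀ d : Fin s → ℝ, (∀ j ∉ T, d j = 0) →
      Q (∑ j, d j • b j) ≤ t' * ((∑ j, d j • b j) ⬝ᵥ (∑ j, d j • b j))) :
    t ≤ t' := by
  obtain ⟨c, d, hcS, hdT, hx, hx0⟩ := exists_common_vector a b ha hb S T hcard
  set x := ∑ i, c i • a i with hxdef
  have hpos : 0 < x ⬝ᵥ x := by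
    have := dotProduct_self_star_pos_iff.mpr hx0
    simpa using this
  have h1 := hlow c hcS
  have h2 := hhigh d hdT
  rw [← hx] at h2
  exact le_of_mul_le_mul_right (h1.trans h2) hpos

variable {m n : ℕ}

/-- Embedding of ℝ^m into ℝ^(m+1) with a zero in position `v`. -/
def embedV (v : Fin (m+1)) (y : Fin m → ℝ) : Fin (m+1) → ℝ := v.insertNth (0:ℝ) y

@[simp] lemma embedV_self (v : Fin (m+1)) (y : Fin m → ℝ) : embedV v y v = 0 := by
  simp [embedV]

@[simp] lemma embedV_succAbove (v : Fin (m+1)) (y : Fin m → ℝ) (i : Fin m) :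
    embedV v y (v.succAbove i) = y i := by
  simp [embedV]

/-- If `x v = 0` then the norm restricts. -/
lemma dot_self_restrict (v : Fin (m+1)) (x : Fin (m+1) → ℝ) (hxv : x v = 0) :
    x ⬝ᵥ x = (x ∘ v.succAbove) ⬝ᵥ (x ∘ v.succAbove) := by
  rw [dotProduct, dotProduct, Fin.sum_univ_succAbove (fun k => x k * x k) v, hxv]
  simp

lemma dot_mulVec_restrict (N : Matrix (Fin (m+1)) (Fin (m+1)) ℝ) (v : Fin (m+1))
    (x : Fin (m+1) → ℝ) (hxv : x v = 0) :
    x ⬝ᵥ (N *ᵥ x) = (x ∘ v.succAbove) ⬝ᵥ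
      ((N.submatrix v.succAbove v.succAbove) *ᵥ (x ∘ v.succAbove)) := by
  rw [dotProduct, dotProduct,
    Fin.sum_univ_succAbove (fun k => x k * (N *ᵥ x) k) v, hxv]
  simp only [zero_mul, zero_add]
  refine Finset.sum_congr rfl fun i _ => ?_
  congr 1
  rw [Matrix.mulVec, Matrix.mulVec, dotProduct, dotProduct,
    Fin.sum_univ_succAbove (fun l => N (v.succAbove i) l * x l) v, hxv]
  simp [Matrix.submatrix_apply]

lemma embed_sum_apply_self (v : Fin (m+1)) (w : Fin m → Fin m → ℝ) (d : Fin m → ℝ) :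
    (∑ j, d j • embedV v (w j)) v = 0 := by
  rw [Finset.sum_apply]
  simp

lemma embed_sum_comp (v : Fin (m+1)) (w : Fin m → Fin m → ℝ) (d : Fin m → ℝ) :
    (∑ j, d j • embedV v (w j)) ∘ v.succAbove = ∑ j, d j • w j := by
  funext i
  rw [Function.comp_apply, Finset.sum_apply, Finset.sum_apply]
  simp

lemma embed_orthonormal (v : Fin (m+1)) (w : Fin m → Fin m → ℝ)
    (hw : ∀ i j, w i ⬝ᵥ w j = if i = j then 1 else 0) (i j : Fin m) :
    embedV v (w i) ⬝ᵥ embedV v (w j) = if i = j then 1 else 0 := by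
  rw [← hw i j, dotProduct, dotProduct,
    Fin.sum_univ_succAbove (fun k => embedV v (w i) k * embedV v (w j) k) v]
  simp

/-- Any symmetric real matrix has an orthonormal eigenbasis with monotone eigenvalues. -/
lemma exists_ordered_eigenbasis {k : ℕ} {M : Matrix (Fin k) (Fin k) ℝ} (hM : M.IsSymm) :
    ∃ (γ : Fin k → ℝ) (u : Fin k → (Fin k → ℝ)), Monotone γ ∧
      (∀ i j, u i ⬝ᵥ u j = if i = j then 1 else 0) ∧ ∀ i, M *ᵥ u i = γ i • u i := by
  have hH : M.IsHermitian := by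
    rw [Matrix.IsHermitian]; ext i j; simp [Matrix.conjTranspose_apply, hM.apply]
  set σ := Tuple.sort hH.eigenvalues with hσ
  refine ⟨hH.eigenvalues ∘ σ, fun i => (WithLp.equiv 2 (Fin k → ℝ)) (hH.eigenvectorBasis (σ i)),
    Tuple.monotone_sort _, ?_, ?_⟩
  · intro i j
    have horth := orthonormal_iff_ite.mp hH.eigenvectorBasis.orthonormal (σ i) (σ j)
    rw [PiLp.inner_apply] at horth
    simpa [dotProduct, RCLike.inner_apply, EmbeddingLike.apply_eq_iff_eq, mul_comm] using horth
  · intro i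
    exact hH.mulVec_eigenvectorBasis (σ i)

lemma netLap_isSymm {k : ℕ} {A : Matrix (Fin k) (Fin k) ℝ} (h : A.IsSymm) :
    (netLap A).IsSymm := by
  rw [Matrix.IsSymm, netLap, Matrix.transpose_sub, Matrix.diagonal_transpose, h]

lemma qform_add_diag {k : ℕ} (P : Matrix (Fin k) (Fin k) ℝ) (e : Fin k → ℝ) (x : Fin k → ℝ) :
    x ⬝ᵥ ((P + Matrix.diagonal e) *ᵥ x) = x ⬝ᵥ (P *ᵥ x) + ∑ i, e i * (x i * x i) := by
  rw [Matrix.add_mulVec, dotProduct_add]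
  congr 1
  rw [dotProduct]
  refine Finset.sum_congr rfl fun i _ => ?_
  rw [Matrix.mulVec_diagonal]
  ring

lemma netLap_deleteVertex {k : ℕ} (A : Matrix (Fin (k+1)) (Fin (k+1)) ℝ)
    (hdiag : ∀ i, A i i = 0) (v : Fin (k+1)) :
    netLap (deleteVertex A v) = (netLap A).submatrix v.succAbove v.succAbove
      + Matrix.diagonal (fun i => - A (v.succAbove i) v) := by
  ext i j
  rcases eq_or_ne i j with rfl | hij
  · simp only [netLap, deleteVertex, Matrix.sub_apply, Matrix.add_apply, Matrix.submatrix_apply,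
      Matrix.diagonal_apply_eq]
    rw [Fin.sum_univ_succAbove (fun l => A (v.succAbove i) l) v]
    ring
  · have hij' : v.succAbove i ≠ v.succAbove j := by
      intro h; exact hij (Fin.succAbove_right_injective h)
    simp only [netLap, deleteVertex, Matrix.sub_apply, Matrix.add_apply, Matrix.submatrix_apply,
      Matrix.diagonal_apply_ne _ hij, Matrix.diagonal_apply_ne _ hij']
    ring

/-- deleting a vertex with zero positive degree, the ordered net-Laplacian
spectra satisfy alpha_p <= beta_p <= alpha_{p+1} + 1 for p = 1,...,m. -/
theorem stmt13 (m : ℕ) (A : Matrix (Fin (m+1)) (Fin (m+1)) ℝ) (hA : IsSignedAdj A)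
    (v : Fin (m+1)) (hv : posDeg A v = 0)
    (α : Fin (m+1) → ℝ) (β : Fin m → ℝ)
    (hα : IsOrderedSpectrum (netLap A) α)
    (hβ : IsOrderedSpectrum (netLap (deleteVertex A v)) β) :
    ∀ p : Fin m, α p.castSucc ≤ β p ∧ β p ≤ α p.succ + 1 := by
  obtain ⟨hsymm, hdiag, hent⟩ := hA
  have hNsym : (netLap A).IsSymm := netLap_isSymm hsymm
  have hBsym : ((netLap A).submatrix v.succAbove v.succAbove).IsSymm := hNsym.submatrix _
  have hN'sym : (netLap (deleteVertex A v)).IsSymm := netLap_isSymm (hsymm.submatrix _)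
  have hrel : netLap (deleteVertex A v) = (netLap A).submatrix v.succAbove v.succAbove
      + Matrix.diagonal (fun i => - A (v.succAbove i) v) := netLap_deleteVertex A hdiag v
  have hvz : ∀ k, A v k ≠ 1 := by
    intro k hk
    have hempty : {j | A v j = 1} = (∅ : Set (Fin (m+1))) :=
      (Set.ncard_eq_zero (Set.toFinite _)).mp hv
    exact absurd hk (by
      have := Set.eq_empty_iff_forall_notMem.mp hempty k
      simpa using this)
  have he01 : ∀ i : Fin m, 0 ≤ -A (v.succAbove i) v ∧ -A (v.succAbove i) v ≤ 1 := by
    intro i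
    have hsym' : A (v.succAbove i) v = A v (v.succAbove i) := (hsymm.apply _ _).symm
    rcases hent (v.succAbove i) v with h | h | h
    · rw [h]; norm_num
    · rw [h]; norm_num
    · exact absurd (hsym' ▸ h) (hvz _)
  obtain ⟨u, hu, huE⟩ := exists_eigenbasis hNsym hα.1 hα.2
  obtain ⟨z, hz, hzE⟩ := exists_eigenbasis hN'sym hβ.1 hβ.2
  obtain ⟨γ, w, hγ, hw, hwE⟩ := exists_ordered_eigenbasis hBsym
  have hwo := embed_orthonormal v w hw
  intro p
  -- (I)  α p.castSucc ≤ γ p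
  have h1 : α p.castSucc ≤ γ p := by
    refine core_compare u (fun j => embedV v (w j)) hu hwo
      (Finset.Ici p.castSucc) (Finset.Iic p) ?_ (fun x => x ⬝ᵥ (netLap A *ᵥ x)) ?_ ?_
    · rw [Fin.card_Ici, Fin.card_Iic, Fin.coe_castSucc]
      have := p.isLt; omega
    · intro c hc
      beta_reduce
      refine qform_ge hu huE c ?_
      intro i hci
      refine hα.1 ?_
      by_contra hlt
      exact hci (hc i (fun hmem => hlt (Finset.mem_Ici.mp hmem)))
    · intro d hd
      beta_reduce
      rw [dot_mulVec_restrict (netLap A) v _ (embed_sum_apply_self v w d),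
        dot_self_restrict v _ (embed_sum_apply_self v w d), embed_sum_comp]
      refine qform_le hw hwE d ?_
      intro j hj
      refine hγ ?_
      by_contra hlt
      exact hj (hd j (fun hmem => hlt (Finset.mem_Iic.mp hmem)))
  -- (II)  γ p ≤ α p.succ
  have h2 : γ p ≤ α p.succ := by
    refine core_compare (fun j => embedV v (w j)) u hwo hu
      (Finset.Ici p) (Finset.Iic p.succ) ?_ (fun x => x ⬝ᵥ (netLap A *ᵥ x)) ?_ ?_
    · rw [Fin.card_Ici, Fin.card_Iic, Fin.val_succ]
      have := p.isLt; omega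
    · intro c hc
      beta_reduce
      rw [dot_mulVec_restrict (netLap A) v _ (embed_sum_apply_self v w c),
        dot_self_restrict v _ (embed_sum_apply_self v w c), embed_sum_comp]
      refine qform_ge hw hwE c ?_
      intro j hj
      refine hγ ?_
      by_contra hlt
      exact hj (hc j (fun hmem => hlt (Finset.mem_Ici.mp hmem)))
    · intro d hd
      beta_reduce
      refine qform_le hu huE d ?_
      intro i hi
      refine hα.1 ?_
      by_contra hlt
      exact hi (hd i (fun hmem => hlt (Finset.mem_Iic.mp hmem)))
  -- (III)  γ p ≤ β p
  have h3 : γ p ≤ β p := by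
    refine core_compare w z hw hz (Finset.Ici p) (Finset.Iic p) ?_
      (fun x => x ⬝ᵥ (netLap (deleteVertex A v) *ᵥ x)) ?_ ?_
    · rw [Fin.card_Ici, Fin.card_Iic]
      have := p.isLt; omega
    · intro c hc
      beta_reduce
      rw [hrel, qform_add_diag]
      have hq : γ p * ((∑ j, c j • w j) ⬝ᵥ (∑ j, c j • w j)) ≤ (∑ j, c j • w j) ⬝ᵥ
          ((netLap A).submatrix v.succAbove v.succAbove *ᵥ (∑ j, c j • w j)) :=
        qform_ge hw hwE c (fun j hj => by
        refine hγ ?_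
        by_contra hlt
        exact hj (hc j (fun hmem => hlt (Finset.mem_Ici.mp hmem))))
      have hext : 0 ≤ ∑ i, (-A (v.succAbove i) v) *
          ((∑ j, c j • w j) i * (∑ j, c j • w j) i) :=
        Finset.sum_nonneg fun i _ => mul_nonneg (he01 i).1 (mul_self_nonneg _)
      linarith
    · intro d hd
      beta_reduce
      refine qform_le hz hzE d ?_
      intro j hj
      refine hβ.1 ?_
      by_contra hlt
      exact hj (hd j (fun hmem => hlt (Finset.mem_Iic.mp hmem)))
  -- (IV)  β p ≤ γ p + 1
  have h4 : β p ≤ γ p + 1 := by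
    refine core_compare z w hz hw (Finset.Ici p) (Finset.Iic p) ?_
      (fun x => x ⬝ᵥ (netLap (deleteVertex A v) *ᵥ x)) ?_ ?_
    · rw [Fin.card_Ici, Fin.card_Iic]
      have := p.isLt; omega
    · intro c hc
      beta_reduce
      refine qform_ge hz hzE c ?_
      intro j hj
      refine hβ.1 ?_
      by_contra hlt
      exact hj (hc j (fun hmem => hlt (Finset.mem_Ici.mp hmem)))
    · intro d hd
      beta_reduce
      rw [hrel, qform_add_diag]
      have hq : (∑ j, d j • w j) ⬝ᵥ
          ((netLap A).submatrix v.succAbove v.succAbove *ᵥ (∑ j, d j • w j)) ≤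
          γ p * ((∑ j, d j • w j) ⬝ᵥ (∑ j, d j • w j)) :=
        qform_le hw hwE d (fun j hj => by
        refine hγ ?_
        by_contra hlt
        exact hj (hd j (fun hmem => hlt (Finset.mem_Iic.mp hmem))))
      have hext : ∑ i, (-A (v.succAbove i) v) *
          ((∑ j, d j • w j) i * (∑ j, d j • w j) i) ≤
          (∑ j, d j • w j) ⬝ᵥ (∑ j, d j • w j) := by
        rw [dotProduct]
        refine Finset.sum_le_sum fun i _ => ?_
        calc (-A (v.succAbove i) v) * ((∑ j, d j • w j) i * (∑ j, d j • w j) i)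
            ≤ 1 * ((∑ j, d j • w j) i * (∑ j, d j • w j) i) :=
              mul_le_mul_of_nonneg_right (he01 i).2 (mul_self_nonneg _)
          _ = (∑ j, d j • w j) i * (∑ j, d j • w j) i := one_mul _
      linarith
  exact ⟨h1.trans h3, h4.trans (by linarith)⟩

end Aux
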